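/- arXiv:2312.16353 — 3 statements merged into one kernel-verified Lean document; each statement's English description precedes it below -/
import Mathlib

section
/- For every nonempty triangular partition τ with leftmost removable cell c⁻ and rightmost removable cell c⁺ (equal if there is only one removable cell), the number of triangular subpartitions satisfies I(τ) = I(τ \ {c⁻}) + I(τ \ {c⁺}) − I(τ°) + 1, where τ° is τ minus the cells of the diagonal segment between c⁻ and c⁺. -/
open Set

/-- The positive quadrant of lattice points, representing ℕ² in the paper. -/
def posQuad : Set (ℕ × ℕ) := {c | 1 ≤ c.1 ∧ 1 ≤ c.2}

/-- Embedding of lattice cells into the real plane. -/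
noncomputable def toR2 (c : ℕ × ℕ) : ℝ × ℝ := ((c.1 : ℝ), (c.2 : ℝ))

/-- A set of cells is triangular if it consists exactly of the points of ℕ²
lying weakly below some line x/r + y/s = 1 with r, s > 0. -/
def IsTriangularSet (S : Set (ℕ × ℕ)) : Prop :=
  ∃ r s : ℝ, 0 < r ∧ 0 < s ∧
    S = {c : ℕ × ℕ | 1 ≤ c.1 ∧ 1 ≤ c.2 ∧ (c.1 : ℝ) / r + (c.2 : ℝ) / s ≤ 1}

/-- `S` is the Ferrers diagram of an integer partition. -/
def IsPartitionSet (S : Set (ℕ × ℕ)) : Prop :=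
  S.Finite ∧ S ⊆ posQuad ∧
    ∀ c ∈ S, ∀ a b : ℕ, 1 ≤ a → a ≤ c.1 → 1 ≤ b → b ≤ c.2 → (a, b) ∈ S

/-- A cell is removable if deleting it yields a triangular partition. -/
def RemovableCell (S : Set (ℕ × ℕ)) (c : ℕ × ℕ) : Prop :=
  c ∈ S ∧ IsTriangularSet (S \ {c})

/-- A cell of the complement is addable if adjoining it yields a triangular partition. -/
def AddableCell (S : Set (ℕ × ℕ)) (c : ℕ × ℕ) : Prop :=
  c ∈ posQuad \ S ∧ IsTriangularSet (insert c S)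

/-- The number of triangular partitions contained in `S` (including ∅ and `S`). -/
noncomputable def numTriSub (S : Set (ℕ × ℕ)) : ℕ :=
  {ν : Set (ℕ × ℕ) | IsTriangularSet ν ∧ ν ⊆ S}.ncard

/-! ### Auxiliary definitions and lemmas -/

/-- The value of the linear form `a x + b y` at a lattice cell. -/
private def lv (a b : ℝ) (c : ℕ × ℕ) : ℝ := a * c.1 + b * c.2

private lemma lv_mono {a b : ℝ} (ha : 0 ≤ a) (hb : 0 ≤ b) {c c' : ℕ × ℕ}
    (h1 : c.1 ≤ c'.1) (h2 : c.2 ≤ c'.2) : lv a b c ≤ lv a b c' := by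
  have e1 := mul_le_mul_of_nonneg_left (show (c.1 : ℝ) ≤ c'.1 by exact_mod_cast h1) ha
  have e2 := mul_le_mul_of_nonneg_left (show (c.2 : ℝ) ≤ c'.2 by exact_mod_cast h2) hb
  simp only [lv]; linarith

/-- Triangularity in terms of a linear form with a general threshold. -/
private lemma tri_iff {S : Set (ℕ × ℕ)} :
    IsTriangularSet S ↔ ∃ a b t : ℝ, 0 < a ∧ 0 < b ∧ 0 < t ∧
      S = {c : ℕ × ℕ | 1 ≤ c.1 ∧ 1 ≤ c.2 ∧ lv a b c ≤ t} := by
  constructor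
  · rintro ⟨r, s, hr, hs, rfl⟩
    refine ⟨s, r, r * s, hs, hr, mul_pos hr hs, ?_⟩
    ext c
    simp only [mem_setOf_eq, lv]
    refine and_congr_right fun _ => and_congr_right fun _ => ?_
    rw [div_add_div _ _ (ne_of_gt hr) (ne_of_gt hs), div_le_one (mul_pos hr hs)]
    constructor <;> intro h <;> nlinarith
  · rintro ⟨a, b, t, ha, hb, ht, rfl⟩
    refine ⟨t / a, t / b, by positivity, by positivity, ?_⟩
    ext c
    simp only [mem_setOf_eq, lv]
    refine and_congr_right fun _ => and_congr_right fun _ => ?_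
    rw [div_div_eq_mul_div, div_div_eq_mul_div, ← add_div, div_le_one ht]
    constructor <;> intro h <;> nlinarith

private lemma lv_finite {a b : ℝ} (ha : 0 < a) (hb : 0 < b) (t : ℝ) :
    {c : ℕ × ℕ | lv a b c ≤ t}.Finite := by
  apply Set.Finite.subset ((Set.finite_Iic ⌊t / a⌋₊).prod (Set.finite_Iic ⌊t / b⌋₊))
  intro c hc
  simp only [mem_setOf_eq, lv] at hc
  have h1 : (0 : ℝ) ≤ b * c.2 := by positivity
  have h2 : (0 : ℝ) ≤ a * c.1 := by positivity
  constructor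
  · exact Nat.le_floor (by rw [le_div_iff₀ ha]; linarith)
  · exact Nat.le_floor (by rw [le_div_iff₀ hb]; linarith)

private lemma tri_finite {S : Set (ℕ × ℕ)} (hS : IsTriangularSet S) : S.Finite := by
  obtain ⟨a, b, t, ha, hb, ht, hEq⟩ := tri_iff.mp hS
  exact (lv_finite ha hb t).subset (by rw [hEq]; exact fun c hc => hc.2.2)

private lemma tri_posQuad {S : Set (ℕ × ℕ)} (hS : IsTriangularSet S) : S ⊆ posQuad := by
  obtain ⟨a, b, t, ha, hb, ht, hEq⟩ := tri_iff.mp hS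
  rw [hEq]; exact fun c hc => ⟨hc.1, hc.2.1⟩

private lemma min_gap {T : Set (ℕ × ℕ)} (hT : T.Finite) (f : ℕ × ℕ → ℝ)
    (hf : ∀ c ∈ T, 0 < f c) : ∃ δ : ℝ, 0 < δ ∧ ∀ c ∈ T, δ ≤ f c := by
  classical
  have hne : (insert (1 : ℝ) (hT.toFinset.image f)).Nonempty :=
    ⟨1, Finset.mem_insert_self _ _⟩
  refine ⟨(insert (1 : ℝ) (hT.toFinset.image f)).min' hne, ?_, ?_⟩
  · have hmem := Finset.min'_mem _ hne
    rcases Finset.mem_insert.mp hmem with h | h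
    · rw [h]; norm_num
    · obtain ⟨c, hc, hfc⟩ := Finset.mem_image.mp h
      rw [← hfc]; exact hf c (hT.mem_toFinset.mp hc)
  · intro c hc
    exact Finset.min'_le _ _
      (Finset.mem_insert_of_mem (Finset.mem_image_of_mem f (hT.mem_toFinset.mpr hc)))

private lemma max_bound {T : Set (ℕ × ℕ)} (hT : T.Finite) :
    ∃ B : ℝ, 0 < B ∧ ∀ c ∈ T, (c.1 : ℝ) ≤ B := by
  classical
  have hne : (insert (1 : ℝ) (hT.toFinset.image fun c => (c.1 : ℝ))).Nonempty :=
    ⟨1, Finset.mem_insert_self _ _⟩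
  refine ⟨(insert (1 : ℝ) (hT.toFinset.image fun c => (c.1 : ℝ))).max' hne, ?_, ?_⟩
  · have h1 : (1 : ℝ) ≤ (insert (1 : ℝ) (hT.toFinset.image fun c => (c.1 : ℝ))).max' hne :=
      Finset.le_max' _ 1 (Finset.mem_insert_self _ _)
    linarith
  · intro c hc
    exact Finset.le_max' _ _
      (Finset.mem_insert_of_mem
        (Finset.mem_image_of_mem (fun c => (c.1 : ℝ)) (hT.mem_toFinset.mpr hc)))

/-- A triangular set admits a strictly separating line with threshold 1. -/
private lemma strictify {S : Set (ℕ × ℕ)} (hS : IsTriangularSet S) :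
    ∃ a b : ℝ, 0 < a ∧ 0 < b ∧ (∀ c ∈ S, lv a b c < 1) ∧
      (∀ c ∈ posQuad, c ∉ S → 1 < lv a b c) := by
  classical
  obtain ⟨a, b, t, ha, hb, ht, hEq⟩ := tri_iff.mp hS
  have hmem : ∀ c ∈ S, lv a b c ≤ t := by
    intro c hc; rw [hEq] at hc; exact hc.2.2
  have hout : ∀ c ∈ posQuad, c ∉ S → t < lv a b c := by
    intro c hc hcS
    by_contra h
    push_neg at h
    exact hcS (by rw [hEq]; exact ⟨hc.1, hc.2, h⟩)
  have hOfin : ({c ∈ posQuad | lv a b c ≤ 2 * t} \ S).Finite :=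
    (lv_finite ha hb (2 * t)).subset (fun c hc => hc.1.2)
  obtain ⟨δ, hδpos, hδ⟩ := min_gap hOfin (fun c => lv a b c - t)
    (fun c hc => sub_pos.mpr (hout c hc.1.1 hc.2))
  have hδ'pos : 0 < min δ t := lt_min hδpos ht
  have hδ't : min δ t ≤ t := min_le_right _ _
  have hδ'δ : min δ t ≤ δ := min_le_left _ _
  have ht'pos : (0 : ℝ) < t + min δ t / 2 := by linarith
  refine ⟨a / (t + min δ t / 2), b / (t + min δ t / 2), by positivity, by positivity, ?_, ?_⟩
  · intro c hc
    have h1 : lv (a / (t + min δ t / 2)) (b / (t + min δ t / 2)) c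
        = lv a b c / (t + min δ t / 2) := by simp only [lv]; ring
    rw [h1, div_lt_one ht'pos]
    have := hmem c hc
    linarith
  · intro c hc hcS
    have h1 : lv (a / (t + min δ t / 2)) (b / (t + min δ t / 2)) c
        = lv a b c / (t + min δ t / 2) := by simp only [lv]; ring
    rw [h1, lt_div_iff₀ ht'pos, one_mul]
    rcases le_or_gt (lv a b c) (2 * t) with h2 | h2
    · have h3 := hδ c ⟨⟨hc, h2⟩, hcS⟩
      linarith
    · linarith

/-- Facts extracted from a removable cell: a linear form separating `d` from the rest. -/
private lemma removable_facts {S : Set (ℕ × ℕ)} {d : ℕ × ℕ} (h : RemovableCell S d)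
    (hd : d ∈ posQuad) :
    ∃ a b t : ℝ, 0 < a ∧ 0 < b ∧ 0 < t ∧ t < lv a b d ∧
      (∀ c ∈ S, c ≠ d → lv a b c ≤ t) ∧
      (∀ p ∈ posQuad, lv a b p ≤ t → p ∈ S ∧ p ≠ d) := by
  obtain ⟨a, b, t, ha, hb, ht, hEq⟩ := tri_iff.mp h.2
  refine ⟨a, b, t, ha, hb, ht, ?_, ?_, ?_⟩
  · by_contra hle
    push_neg at hle
    have hmem : d ∈ S \ {d} := by rw [hEq]; exact ⟨hd.1, hd.2, hle⟩
    exact hmem.2 rfl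
  · intro c hc hcd
    have hmem : c ∈ S \ {d} := ⟨hc, hcd⟩
    rw [hEq] at hmem
    exact hmem.2.2
  · intro p hp hle
    have hmem : p ∈ S \ {d} := by rw [hEq]; exact ⟨hp.1, hp.2, hle⟩
    exact ⟨hmem.1, hmem.2⟩

/-- Two distinct removable cells are incomparable. -/
private lemma removable_incomp {S : Set (ℕ × ℕ)} {d e : ℕ × ℕ} (hd : RemovableCell S d)
    (hdq : d ∈ posQuad) (he : e ∈ S) (hne : e ≠ d) (h1 : d.1 ≤ e.1) (h2 : d.2 ≤ e.2) :
    False := by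
  obtain ⟨a, b, t, ha, hb, ht, hdt, hSt, _⟩ := removable_facts hd hdq
  have he' := hSt e he hne
  have hmono := lv_mono (le_of_lt ha) (le_of_lt hb) h1 h2
  linarith

/-- If `ν ⊊ S` are both triangular, `S` has a removable cell outside `ν`. -/
private lemma exists_removable_outside {S ν : Set (ℕ × ℕ)} (hS : IsTriangularSet S)
    (hν : IsTriangularSet ν) (hsub : ν ⊆ S) (hne : (S \ ν).Nonempty) :
    ∃ d, d ∈ S ∧ d ∉ ν ∧ RemovableCell S d := by
  classical
  obtain ⟨ag, bg, hag, hbg, hgS, hgO⟩ := strictify hS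
  obtain ⟨af, bf, haf, hbf, hfν, hfO⟩ := strictify hν
  have hSpos := tri_posQuad hS
  have hSfin := tri_finite hS
  have hdifffin : (S \ ν).Finite := hSfin.subset diff_subset
  have hkey : ∀ c ∈ S \ ν, lv ag bg c < 1 ∧ 1 < lv af bf c := by
    intro c hc
    exact ⟨hgS c hc.1, hfO c (hSpos hc.1) hc.2⟩
  obtain ⟨c₀, hc₀, hmin⟩ := Set.exists_min_image (S \ ν)
    (fun c => (1 - lv ag bg c) / (lv af bf c - lv ag bg c)) hdifffin hne
  obtain ⟨hG0, hF0⟩ := hkey c₀ hc₀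
  set θ := (1 - lv ag bg c₀) / (lv af bf c₀ - lv ag bg c₀) with hθdef
  have hθpos : 0 < θ := div_pos (by linarith) (by linarith)
  have hθlt1 : θ < 1 := (div_lt_one (by linarith)).mpr (by linarith)
  set aL := (1 - θ) * ag + θ * af with haL
  set bL := (1 - θ) * bg + θ * bf with hbL
  have haLpos : 0 < aL := by
    have : 0 < 1 - θ := by linarith
    positivity
  have hbLpos : 0 < bL := by
    have : 0 < 1 - θ := by linarith
    positivity
  have hLdef : ∀ c : ℕ × ℕ, lv aL bL c = (1 - θ) * lv ag bg c + θ * lv af bf c := by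
    intro c; simp only [lv, haL, hbL]; ring
  have hLν : ∀ c ∈ ν, lv aL bL c < 1 := by
    intro c hc
    have h1 : lv ag bg c < 1 := hgS c (hsub hc)
    have h2 : lv af bf c < 1 := hfν c hc
    rw [hLdef]; nlinarith
  have hLS : ∀ c ∈ S, lv aL bL c ≤ 1 := by
    intro c hc
    by_cases hcν : c ∈ ν
    · exact le_of_lt (hLν c hcν)
    · obtain ⟨hG, hF⟩ := hkey c ⟨hc, hcν⟩
      have hmin' := hmin c ⟨hc, hcν⟩
      have hFG : 0 < lv af bf c - lv ag bg c := by linarith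
      have h2 : θ * (lv af bf c - lv ag bg c) ≤ 1 - lv ag bg c := by
        calc θ * (lv af bf c - lv ag bg c)
            ≤ ((1 - lv ag bg c) / (lv af bf c - lv ag bg c)) * (lv af bf c - lv ag bg c) :=
              mul_le_mul_of_nonneg_right hmin' (le_of_lt hFG)
          _ = 1 - lv ag bg c := div_mul_cancel₀ _ (ne_of_gt hFG)
      have h3 : (1 - θ) * lv ag bg c + θ * lv af bf c
          = lv ag bg c + θ * (lv af bf c - lv ag bg c) := by ring
      rw [hLdef, h3]; linarith
  have hLout : ∀ p ∈ posQuad, p ∉ S → 1 < lv aL bL p := by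
    intro p hp hpS
    have h1 : 1 < lv ag bg p := hgO p hp hpS
    have h2 : 1 < lv af bf p := hfO p hp (fun h => hpS (hsub h))
    rw [hLdef]; nlinarith
  have hLc₀ : lv aL bL c₀ = 1 := by
    have hFG : lv af bf c₀ - lv ag bg c₀ ≠ 0 := by linarith
    have h2 : θ * (lv af bf c₀ - lv ag bg c₀) = 1 - lv ag bg c₀ := by
      rw [hθdef]; exact div_mul_cancel₀ _ hFG
    have h3 : (1 - θ) * lv ag bg c₀ + θ * lv af bf c₀
        = lv ag bg c₀ + θ * (lv af bf c₀ - lv ag bg c₀) := by ring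
    rw [hLdef, h3, h2]; ring
  clear_value θ aL bL
  -- the contact set M and its rightmost cell d
  have hMfin : ({c ∈ S | lv aL bL c = 1}).Finite := hSfin.subset (fun c hc => hc.1)
  have hMne : ({c ∈ S | lv aL bL c = 1}).Nonempty := ⟨c₀, hc₀.1, hLc₀⟩
  obtain ⟨d, hdM, hdmax⟩ := Set.exists_max_image _ (fun c : ℕ × ℕ => c.1) hMfin hMne
  have hdS : d ∈ S := hdM.1
  have hdL : lv aL bL d = 1 := hdM.2
  have hdν : d ∉ ν := by
    intro h
    have := hLν d h
    rw [hdL] at this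
    exact lt_irrefl 1 this
  have hdx1 : 1 ≤ d.1 := (hSpos hdS).1
  -- quantities for the tilting
  obtain ⟨B, hBpos, hB⟩ := max_bound hSfin
  obtain ⟨δ₁, hδ₁pos, hδ₁⟩ := min_gap (hSfin.subset (fun c hc => hc.1) :
      ({c ∈ S | lv aL bL c < 1}).Finite) (fun c => 1 - lv aL bL c)
    (fun c hc => sub_pos.mpr hc.2)
  obtain ⟨δ₂, hδ₂pos, hδ₂⟩ := min_gap ((lv_finite haLpos hbLpos 2).subset
      (fun c hc => hc.1.2) : ({p ∈ posQuad | lv aL bL p ≤ 2} \ S).Finite)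
    (fun c => lv aL bL c - 1) (fun c hc => sub_pos.mpr (hLout c hc.1.1 hc.2))
  set X := (d.1 : ℝ) - 1 / 2 with hXdef
  have hXpos : 0 < X := by
    have : (1 : ℝ) ≤ d.1 := by exact_mod_cast hdx1
    rw [hXdef]; linarith
  set ε := min (δ₁ / B) (min (δ₂ / (2 * X)) (1 / (2 * X))) with hεdef
  have hεpos : 0 < ε := by
    apply lt_min (div_pos hδ₁pos hBpos)
    exact lt_min (div_pos hδ₂pos (by linarith)) (div_pos one_pos (by linarith))
  have hεB : ε * B ≤ δ₁ := by
    have h1 : ε ≤ δ₁ / B := min_le_left _ _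
    calc ε * B ≤ (δ₁ / B) * B := mul_le_mul_of_nonneg_right h1 (le_of_lt hBpos)
      _ = δ₁ := div_mul_cancel₀ _ (ne_of_gt hBpos)
  have hεX1 : ε * X ≤ δ₂ / 2 := by
    have h1 : ε ≤ δ₂ / (2 * X) := le_trans (min_le_right _ _) (min_le_left _ _)
    calc ε * X ≤ (δ₂ / (2 * X)) * X := mul_le_mul_of_nonneg_right h1 (le_of_lt hXpos)
      _ = δ₂ / 2 := by field_simp
  have hεX2 : ε * X ≤ 1 / 2 := by
    have h1 : ε ≤ 1 / (2 * X) := le_trans (min_le_right _ _) (min_le_right _ _)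
    calc ε * X ≤ (1 / (2 * X)) * X := mul_le_mul_of_nonneg_right h1 (le_of_lt hXpos)
      _ = 1 / 2 := by field_simp
  clear_value X ε
  refine ⟨d, hdS, hdν, hdS, ?_⟩
  rw [tri_iff]
  refine ⟨aL + ε, bL, 1 + ε * X, by positivity, hbLpos, by positivity, ?_⟩
  ext c
  simp only [mem_diff, mem_singleton_iff, mem_setOf_eq]
  have hlv : lv (aL + ε) bL c = lv aL bL c + ε * c.1 := by simp only [lv]; ring
  constructor
  · rintro ⟨hcS, hcd⟩
    refine ⟨(hSpos hcS).1, (hSpos hcS).2, ?_⟩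
    rw [hlv]
    by_cases hcM : c ∈ {c ∈ S | lv aL bL c = 1}
    · have hx : c.1 ≠ d.1 := by
        intro hx
        apply hcd
        have h1 : lv aL bL c = 1 := hcM.2
        have hxr : (c.1 : ℝ) = d.1 := by exact_mod_cast hx
        have h2 : bL * c.2 = bL * d.2 := by
          simp only [lv] at h1 hdL
          rw [hxr] at h1
          linarith
        have h3 : (c.2 : ℝ) = d.2 := mul_left_cancel₀ (ne_of_gt hbLpos) h2
        exact Prod.ext_iff.mpr ⟨hx, by exact_mod_cast h3⟩
      have hxle : c.1 + 1 ≤ d.1 := Nat.succ_le_of_lt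
        (lt_of_le_of_ne (hdmax c hcM) hx)
      have hxr : (c.1 : ℝ) + 1 ≤ d.1 := by exact_mod_cast hxle
      have hcX : (c.1 : ℝ) ≤ X := by rw [hXdef]; linarith
      have h4 : ε * c.1 ≤ ε * X := mul_le_mul_of_nonneg_left hcX (le_of_lt hεpos)
      rw [hcM.2]
      linarith
    · have hlt : lv aL bL c < 1 := lt_of_le_of_ne (hLS c hcS)
        (fun h => hcM ⟨hcS, h⟩)
      rcases le_or_gt (c.1 : ℝ) X with hle | hgt
      · have h4 : ε * c.1 ≤ ε * X := mul_le_mul_of_nonneg_left hle (le_of_lt hεpos)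
        linarith
      · have hc1B : (c.1 : ℝ) ≤ B := hB c hcS
        have h1 : δ₁ ≤ 1 - lv aL bL c := hδ₁ c ⟨hcS, hlt⟩
        have h2 : ε * c.1 ≤ ε * B := mul_le_mul_of_nonneg_left hc1B (le_of_lt hεpos)
        have h3 : 0 ≤ ε * X := by positivity
        linarith
  · rintro ⟨h1, h2, h3⟩
    rw [hlv] at h3
    have hcd : c ≠ d := by
      rintro rfl
      rw [hdL] at h3
      have hXc : X < (c.1 : ℝ) := by rw [hXdef]; linarith
      have := mul_lt_mul_of_pos_left hXc hεpos
      linarith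
    refine ⟨?_, hcd⟩
    by_contra hcS
    have hLc : 1 < lv aL bL c := hLout c ⟨h1, h2⟩ hcS
    rcases le_or_gt X (c.1 : ℝ) with hge | hlt
    · have h4 : ε * X ≤ ε * c.1 := mul_le_mul_of_nonneg_left hge (le_of_lt hεpos)
      linarith
    · have h5 : (0 : ℝ) ≤ ε * c.1 := by positivity
      rcases le_or_gt (lv aL bL c) 2 with hle2 | hgt2
      · have hδ : δ₂ ≤ lv aL bL c - 1 := hδ₂ c ⟨⟨⟨h1, h2⟩, hle2⟩, hcS⟩
        linarith
      · linarith

/-- The key lemma: a triangular subpartition of `S` containing both extreme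
removable cells equals `S`. -/
private lemma key_lemma {S : Set (ℕ × ℕ)} (hS : IsTriangularSet S) {cm cp : ℕ × ℕ}
    (hcm : RemovableCell S cm ∧ ∀ c, RemovableCell S c → cm.1 ≤ c.1)
    (hcp : RemovableCell S cp ∧ ∀ c, RemovableCell S c → c.1 ≤ cp.1)
    {ν : Set (ℕ × ℕ)} (hν : IsTriangularSet ν) (hsub : ν ⊆ S) (hm : cm ∈ ν)
    (hp : cp ∈ ν) : ν = S := by
  by_contra hne
  have hSpos := tri_posQuad hS
  have hdne : (S \ ν).Nonempty := diff_nonempty.mpr (fun h => hne (subset_antisymm hsub h))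
  obtain ⟨d, hdS, hdν, hdrem⟩ := exists_removable_outside hS hν hsub hdne
  have hcmS : cm ∈ S := hcm.1.1
  have hcpS : cp ∈ S := hcp.1.1
  have hdcm : d ≠ cm := fun h => hdν (h ▸ hm)
  have hdcp : d ≠ cp := fun h => hdν (h ▸ hp)
  have hmd : cm.1 ≤ d.1 := hcm.2 d hdrem
  have hdp : d.1 ≤ cp.1 := hcp.2 d hdrem
  have hvq : d.2 < cm.2 := by
    by_contra hle
    push_neg at hle
    exact removable_incomp hcm.1 (hSpos hcmS) hdS hdcm hmd hle
  have hQv : cp.2 < d.2 := by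
    by_contra hle
    push_neg at hle
    exact removable_incomp hdrem (hSpos hdS) hcpS (Ne.symm hdcp) hdp hle
  have hpu : cm.1 < d.1 := by
    rcases lt_or_eq_of_le hmd with h | h
    · exact h
    · exact absurd (removable_incomp hdrem (hSpos hdS) hcmS (Ne.symm hdcm)
        (le_of_eq h.symm) (le_of_lt hvq)) (fun h' => h')
  have huP : d.1 < cp.1 := by
    rcases lt_or_eq_of_le hdp with h | h
    · exact h
    · exact absurd (removable_incomp hcp.1 (hSpos hcpS) hdS hdcp
        (le_of_eq h.symm) (le_of_lt hQv)) (fun h' => h')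
  obtain ⟨a1, b1, t1, ha1, hb1, ht1, hcm_gt, hS1, hin1⟩ :=
    removable_facts hcm.1 (hSpos hcmS)
  obtain ⟨a2, b2, t2, ha2, hb2, ht2, hd_gt, hS2, hin2⟩ :=
    removable_facts hdrem (hSpos hdS)
  obtain ⟨a3, b3, t3, ha3, hb3, ht3, hcp_gt, hS3, hin3⟩ :=
    removable_facts hcp.1 (hSpos hcpS)
  have h1d : lv a1 b1 d ≤ t1 := hS1 d hdS hdcm
  have h2m : lv a2 b2 cm ≤ t2 := hS2 cm hcmS (fun h => hdcm h.symm)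
  have h2p : lv a2 b2 cp ≤ t2 := hS2 cp hcpS (fun h => hdcp h.symm)
  have h3d : lv a3 b3 d ≤ t3 := hS3 d hdS hdcp
  by_cases hc1 : cp.1 + 1 ≤ 2 * d.1
  · -- reflect cp through d
    have hx : cp.1 ≤ 2 * d.1 := by omega
    have hy : cp.2 ≤ 2 * d.2 := by omega
    have hcast : ∀ a b : ℝ, lv a b (2 * d.1 - cp.1, 2 * d.2 - cp.2)
        = 2 * lv a b d - lv a b cp := by
      intro a b
      simp only [lv]
      rw [Nat.cast_sub hx, Nat.cast_sub hy]
      push_cast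
      ring
    have hnpos : (2 * d.1 - cp.1, 2 * d.2 - cp.2) ∈ posQuad :=
      ⟨by simp; omega, by simp; omega⟩
    have h3n : lv a3 b3 (2 * d.1 - cp.1, 2 * d.2 - cp.2) ≤ t3 := by
      rw [hcast]; linarith
    obtain ⟨hnS, _⟩ := hin3 _ hnpos h3n
    have hnd : (2 * d.1 - cp.1, 2 * d.2 - cp.2) ≠ d := by
      intro h
      have h' := congrArg Prod.fst h
      simp only at h'
      omega
    have hfin := hS2 _ hnS hnd
    rw [hcast] at hfin
    linarith
  · by_cases hc2 : cm.2 + 1 ≤ 2 * d.2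
    · -- reflect cm through d
      have hx : cm.1 ≤ 2 * d.1 := by omega
      have hy : cm.2 ≤ 2 * d.2 := by omega
      have hcast : ∀ a b : ℝ, lv a b (2 * d.1 - cm.1, 2 * d.2 - cm.2)
          = 2 * lv a b d - lv a b cm := by
        intro a b
        simp only [lv]
        rw [Nat.cast_sub hx, Nat.cast_sub hy]
        push_cast
        ring
      have hnpos : (2 * d.1 - cm.1, 2 * d.2 - cm.2) ∈ posQuad :=
        ⟨by simp; omega, by simp; omega⟩
      have h1n : lv a1 b1 (2 * d.1 - cm.1, 2 * d.2 - cm.2) ≤ t1 := by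
        rw [hcast]; linarith
      obtain ⟨hnS, _⟩ := hin1 _ hnpos h1n
      have hnd : (2 * d.1 - cm.1, 2 * d.2 - cm.2) ≠ d := by
        intro h
        have h' := congrArg Prod.fst h
        simp only at h'
        omega
      have hfin := hS2 _ hnS hnd
      rw [hcast] at hfin
      linarith
    · -- middle case: d is dominated by the midpoint of cm and cp
      push_neg at hc1 hc2
      have hq1 : 1 ≤ cm.1 := (hSpos hcmS).1
      have hq2 : 1 ≤ cp.2 := (hSpos hcpS).2
      have hx : (2 * (d.1 : ℝ)) ≤ (cm.1 : ℝ) + cp.1 := by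
        have : 2 * d.1 ≤ cm.1 + cp.1 := by omega
        exact_mod_cast this
      have hy : (2 * (d.2 : ℝ)) ≤ (cm.2 : ℝ) + cp.2 := by
        have : 2 * d.2 ≤ cm.2 + cp.2 := by omega
        exact_mod_cast this
      have e1 : a2 * (2 * (d.1 : ℝ)) ≤ a2 * ((cm.1 : ℝ) + cp.1) :=
        mul_le_mul_of_nonneg_left hx (le_of_lt ha2)
      have e2 : b2 * (2 * (d.2 : ℝ)) ≤ b2 * ((cm.2 : ℝ) + cp.2) :=
        mul_le_mul_of_nonneg_left hy (le_of_lt hb2)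
      simp only [lv] at h2m h2p hd_gt
      nlinarith [e1, e2, h2m, h2p, hd_gt]

/-- A triangular set avoiding `cm` and `cp` avoids the whole segment between them. -/
private lemma segment_avoid {ν : Set (ℕ × ℕ)} (hν : IsTriangularSet ν) {cm cp c : ℕ × ℕ}
    (hmq : cm ∈ posQuad) (hpq : cp ∈ posQuad) (hmν : cm ∉ ν) (hpν : cp ∉ ν)
    (hseg : toR2 c ∈ segment ℝ (toR2 cm) (toR2 cp)) : c ∉ ν := by
  intro hcν
  obtain ⟨a, b, t, ha, hb, ht, hEq⟩ := tri_iff.mp hν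
  have hmt : t < lv a b cm := by
    by_contra h
    push_neg at h
    exact hmν (by rw [hEq]; exact ⟨hmq.1, hmq.2, h⟩)
  have hpt : t < lv a b cp := by
    by_contra h
    push_neg at h
    exact hpν (by rw [hEq]; exact ⟨hpq.1, hpq.2, h⟩)
  have hct : lv a b c ≤ t := by
    rw [hEq] at hcν
    exact hcν.2.2
  obtain ⟨α, β, hα, hβ, hαβ, heq⟩ := hseg
  have h1 : (c.1 : ℝ) = α * cm.1 + β * cp.1 := by
    have := congrArg Prod.fst heq
    simpa [toR2] using this.symm
  have h2 : (c.2 : ℝ) = α * cm.2 + β * cp.2 := by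
    have := congrArg Prod.snd heq
    simpa [toR2] using this.symm
  have hle : lv a b c = α * lv a b cm + β * lv a b cp := by
    simp only [lv]
    rw [h1, h2]
    ring
  have ht' : α * t + β * t = t := by rw [← add_mul, hαβ, one_mul]
  rcases eq_or_lt_of_le hα with h0 | h0
  · have hβ1 : β = 1 := by linarith
    rw [← h0, hβ1] at hle
    simp at hle
    linarith
  · have e1 : α * t < α * lv a b cm := mul_lt_mul_of_pos_left hmt h0
    have e2 : β * t ≤ β * lv a b cp := mul_le_mul_of_nonneg_left (le_of_lt hpt) hβ
    linarith

/-- the recurrence I(τ) = I(τ \ {c⁻}) + I(τ \ {c⁺}) − I(τ°) + 1,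
where c⁻, c⁺ are the leftmost and rightmost removable cells of τ, and τ° is τ
minus the cells on the segment between c⁻ and c⁺. -/
theorem stmt15 (S : Set (ℕ × ℕ)) (hS : IsTriangularSet S) (hne : S.Nonempty)
    (cm cp : ℕ × ℕ)
    (hcm : RemovableCell S cm ∧ ∀ c, RemovableCell S c → cm.1 ≤ c.1)
    (hcp : RemovableCell S cp ∧ ∀ c, RemovableCell S c → c.1 ≤ cp.1) :
    (numTriSub S : ℤ) =
      (numTriSub (S \ {cm}) : ℤ) + (numTriSub (S \ {cp}) : ℤ) -
        (numTriSub (S \ {c | c ∈ S ∧ toR2 c ∈ segment ℝ (toR2 cm) (toR2 cp)}) : ℤ) + 1 := by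
  classical
  have hSfin := tri_finite hS
  have hSpos := tri_posQuad hS
  have hcmS : cm ∈ S := hcm.1.1
  have hcpS : cp ∈ S := hcp.1.1
  simp only [numTriSub]
  set D : Set (ℕ × ℕ) := {c | c ∈ S ∧ toR2 c ∈ segment ℝ (toR2 cm) (toR2 cp)} with hD
  set F := {ν : Set (ℕ × ℕ) | IsTriangularSet ν ∧ ν ⊆ S} with hF
  set Fm := {ν : Set (ℕ × ℕ) | IsTriangularSet ν ∧ ν ⊆ S \ {cm}} with hFm
  set Fp := {ν : Set (ℕ × ℕ) | IsTriangularSet ν ∧ ν ⊆ S \ {cp}} with hFp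
  set FD := {ν : Set (ℕ × ℕ) | IsTriangularSet ν ∧ ν ⊆ S \ D} with hFD
  have hFfin : F.Finite := hSfin.finite_subsets.subset (fun ν hν => hν.2)
  have hFmfin : Fm.Finite := hFfin.subset (fun ν hν => ⟨hν.1, hν.2.trans diff_subset⟩)
  have hFpfin : Fp.Finite := hFfin.subset (fun ν hν => ⟨hν.1, hν.2.trans diff_subset⟩)
  have hABC : F = insert S (Fm ∪ Fp) := by
    ext ν
    simp only [mem_insert_iff, mem_union, hF, hFm, hFp, mem_setOf_eq]
    constructor
    · rintro ⟨hνt, hνs⟩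
      by_cases hcmν : cm ∈ ν
      · by_cases hcpν : cp ∈ ν
        · exact Or.inl (key_lemma hS hcm hcp hνt hνs hcmν hcpν)
        · exact Or.inr (Or.inr ⟨hνt, subset_diff_singleton hνs hcpν⟩)
      · exact Or.inr (Or.inl ⟨hνt, subset_diff_singleton hνs hcmν⟩)
    · rintro (rfl | ⟨h1, h2⟩ | ⟨h1, h2⟩)
      · exact ⟨hS, subset_rfl⟩
      · exact ⟨h1, h2.trans diff_subset⟩
      · exact ⟨h1, h2.trans diff_subset⟩
  have hSnotin : S ∉ Fm ∪ Fp := by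
    rintro (h | h)
    · exact (h.2 hcmS).2 rfl
    · exact (h.2 hcpS).2 rfl
  have hinter : Fm ∩ Fp = FD := by
    ext ν
    simp only [mem_inter_iff, hFm, hFp, hFD, mem_setOf_eq]
    constructor
    · rintro ⟨⟨hνt, hm'⟩, ⟨-, hp'⟩⟩
      have hcmν : cm ∉ ν := fun h => (hm' h).2 rfl
      have hcpν : cp ∉ ν := fun h => (hp' h).2 rfl
      refine ⟨hνt, fun c hc => ⟨(hm' hc).1, fun hcD => ?_⟩⟩
      exact segment_avoid hνt (hSpos hcmS) (hSpos hcpS) hcmν hcpν hcD.2 hc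
    · rintro ⟨hνt, hsb⟩
      have hνS : ν ⊆ S := hsb.trans diff_subset
      have hcmν : cm ∉ ν := fun h => (hsb h).2 ⟨hcmS, left_mem_segment ℝ _ _⟩
      have hcpν : cp ∉ ν := fun h => (hsb h).2 ⟨hcpS, right_mem_segment ℝ _ _⟩
      exact ⟨⟨hνt, subset_diff_singleton hνS hcmν⟩,
        ⟨hνt, subset_diff_singleton hνS hcpν⟩⟩
  have e1 : F.ncard = (Fm ∪ Fp).ncard + 1 := by
    rw [hABC, Set.ncard_insert_of_notMem hSnotin (hFmfin.union hFpfin)]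
  have e2 : (Fm ∪ Fp).ncard + FD.ncard = Fm.ncard + Fp.ncard := by
    rw [← hinter]
    exact Set.ncard_union_add_ncard_inter _ _ hFmfin hFpfin
  omega
end

section
/- For positive integers h, ℓ, a triangular partition ν fits inside an h × ℓ rectangle (height at most h, width at most ℓ) if and only if ν is contained in the triangular partition τ = (τ₁,...,τ_h) with τ_j = ⌊ℓ + 1 − (ℓ(j−1) + 1)/h⌋ for 1 ≤ j ≤ h. -/
open Set

lemma key_lem (h ℓ x y : ℕ) (hh : 1 ≤ h) :
    ((x:ℤ) ≤ ⌊(ℓ : ℝ) + 1 - ((ℓ : ℝ) * ((y : ℝ) - 1) + 1) / (h : ℝ)⌋) ↔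
    (h:ℝ)*x + ℓ*y ≤ (h:ℝ)*ℓ + h + ℓ - 1 := by
  have hpos : (0:ℝ) < h := by exact_mod_cast hh
  rw [Int.le_floor]
  push_cast
  have hd : ((ℓ:ℝ)*((y:ℝ)-1)+1)/h * h = (ℓ:ℝ)*((y:ℝ)-1)+1 :=
    div_mul_cancel₀ _ (ne_of_gt hpos)
  rw [show ((x:ℝ) ≤ (ℓ:ℝ) + 1 - ((ℓ:ℝ)*((y:ℝ)-1)+1)/h) ↔
      ((h:ℝ)*x ≤ h*((ℓ:ℝ) + 1 - ((ℓ:ℝ)*((y:ℝ)-1)+1)/h)) from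
    (mul_le_mul_iff_right₀ hpos).symm]
  constructor <;> intro H <;> nlinarith

set_option maxHeartbeats 1000000 in
/-- the set τ with parts τ_j = ⌊ℓ + 1 − (ℓ(j−1) + 1)/h⌋ for
1 ≤ j ≤ h is a triangular partition, and a triangular partition ν fits inside an
h × ℓ rectangle if and only if ν ⊆ τ. -/
theorem stmt16 (h ℓ : ℕ) (hh : 1 ≤ h) (hℓ : 1 ≤ ℓ) :
    IsTriangularSet {c : ℕ × ℕ | 1 ≤ c.1 ∧ 1 ≤ c.2 ∧ c.2 ≤ h ∧
        (c.1 : ℤ) ≤ ⌊(ℓ : ℝ) + 1 - ((ℓ : ℝ) * ((c.2 : ℝ) - 1) + 1) / (h : ℝ)⌋} ∧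
    ∀ ν : Set (ℕ × ℕ), IsTriangularSet ν →
      ((∀ c ∈ ν, c.1 ≤ ℓ ∧ c.2 ≤ h) ↔
        ν ⊆ {c : ℕ × ℕ | 1 ≤ c.1 ∧ 1 ≤ c.2 ∧ c.2 ≤ h ∧
          (c.1 : ℤ) ≤ ⌊(ℓ : ℝ) + 1 - ((ℓ : ℝ) * ((c.2 : ℝ) - 1) + 1) / (h : ℝ)⌋}) := by
  have hpos : (0:ℝ) < h := by exact_mod_cast hh
  have lpos : (0:ℝ) < ℓ := by exact_mod_cast hℓ
  have h1R : (1:ℝ) ≤ h := by exact_mod_cast hh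
  have l1R : (1:ℝ) ≤ ℓ := by exact_mod_cast hℓ
  have hNpos : 0 < (h:ℝ)*ℓ + h + ℓ - 1 := by nlinarith
  constructor
  · refine ⟨((h:ℝ)*ℓ + h + ℓ - 1) / h, ((h:ℝ)*ℓ + h + ℓ - 1) / ℓ, div_pos hNpos hpos, div_pos hNpos lpos, ?_⟩
    have hdiv : ∀ x y : ℕ, ((x:ℝ)/(((h:ℝ)*ℓ + h + ℓ - 1)/h) + (y:ℝ)/(((h:ℝ)*ℓ + h + ℓ - 1)/ℓ) ≤ 1 ↔ (h:ℝ)*x + ℓ*y ≤ (h:ℝ)*ℓ + h + ℓ - 1) := by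
      intro x y
      rw [div_div_eq_mul_div, div_div_eq_mul_div, ← add_div, div_le_one hNpos]
      constructor <;> intro H <;> linarith
    ext ⟨x, y⟩
    simp only [mem_setOf_eq]
    constructor
    · rintro ⟨h1x, h1y, hyh, hfl⟩
      exact ⟨h1x, h1y, (hdiv x y).2 ((key_lem h ℓ x y hh).1 hfl)⟩
    · rintro ⟨h1x, h1y, hle⟩
      have hre : (h:ℝ)*x + ℓ*y ≤ (h:ℝ)*ℓ + h + ℓ - 1 := (hdiv x y).1 hle
      have hx1 : (1:ℝ) ≤ x := by exact_mod_cast h1x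
      have hyR : (y:ℝ) < h + 1 := by
        have h2 : (ℓ:ℝ)*y < ℓ*(h+1) := by nlinarith
        exact lt_of_mul_lt_mul_left h2 lpos.le
      have hyh : y < h + 1 := by exact_mod_cast hyR
      exact ⟨h1x, h1y, by omega, (key_lem h ℓ x y hh).2 hre⟩
  · intro ν hν
    obtain ⟨r, s, hr, hs, rfl⟩ := hν
    constructor
    · intro Hb c hc
      obtain ⟨x, y⟩ := c
      obtain ⟨h1x, h1y, hf⟩ := hc
      obtain ⟨hxℓ, hyh⟩ := Hb (x, y) ⟨h1x, h1y, hf⟩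
      refine ⟨h1x, h1y, hyh, (key_lem h ℓ x y hh).2 ?_⟩
      by_contra Hgt
      push_neg at Hgt
      have hint : ((h:ℝ)*ℓ + h + ℓ) ≤ (h:ℝ)*x + ℓ*y := by
        have h1 : h*ℓ + h + ℓ ≤ h*x + ℓ*y := by
          by_contra hc'
          push_neg at hc'
          have h2 : h*x + ℓ*y + 1 ≤ h*ℓ + h + ℓ := hc'
          have h3 : (h:ℝ)*x + ℓ*y + 1 ≤ (h:ℝ)*ℓ + h + ℓ := by exact_mod_cast h2
          linarith
        calc ((h:ℝ)*ℓ + h + ℓ) = ((h*ℓ + h + ℓ : ℕ) : ℝ) := by push_cast; ring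
          _ ≤ ((h*x + ℓ*y : ℕ) : ℝ) := by exact_mod_cast h1
          _ = (h:ℝ)*x + ℓ*y := by push_cast; ring
      obtain ⟨lam, hlam⟩ : ∃ t : ℝ, t = ((x:ℝ) - 1) / ℓ := ⟨_, rfl⟩
      have hx1 : (1:ℝ) ≤ x := by exact_mod_cast h1x
      have hxl : (x:ℝ) ≤ ℓ := by exact_mod_cast hxℓ
      have hlaml : lam * (ℓ:ℝ) = (x:ℝ) - 1 := by
        rw [hlam]; exact div_mul_cancel₀ _ lpos.ne'
      have hlam0 : 0 ≤ lam := by rw [hlam]; exact div_nonneg (by linarith) lpos.le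
      have hlam1 : lam ≤ 1 := by rw [hlam, div_le_one lpos]; linarith
      obtain ⟨fA, hfA⟩ : ∃ t : ℝ, t = ((ℓ:ℝ)+1)/r + 1/s := ⟨_, rfl⟩
      obtain ⟨fB, hfB⟩ : ∃ t : ℝ, t = 1/r + ((h:ℝ)+1)/s := ⟨_, rfl⟩
      obtain ⟨Y0, hY0⟩ : ∃ t : ℝ, t = (h:ℝ) + 1 - lam * h := ⟨_, rfl⟩
      have hY0y : Y0 ≤ (y:ℝ) := by
        have e1 : (ℓ:ℝ) * Y0 = (ℓ:ℝ)*((h:ℝ)+1) - (lam * (ℓ:ℝ))*h := by rw [hY0]; ring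
        rw [hlaml] at e1
        have h2 : (ℓ:ℝ) * Y0 ≤ (ℓ:ℝ) * y := by rw [e1]; nlinarith
        exact le_of_mul_le_mul_left h2 lpos
      have hP : lam * fA + (1 - lam) * fB = (x:ℝ)/r + Y0/s := by
        rw [hfA, hfB, hY0, show (x:ℝ) = lam * ℓ + 1 by rw [hlaml]; ring]
        field_simp
        ring
      have hcomb : lam * fA + (1 - lam) * fB ≤ 1 := by
        rw [hP]
        have hq : Y0 / s ≤ (y:ℝ) / s := by gcongr
        have hfr : (x:ℝ)/r + (y:ℝ)/s ≤ 1 := hf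
        linarith
      have hAB : fA ≤ 1 ∨ fB ≤ 1 := by
        by_contra hcon
        push_neg at hcon
        obtain ⟨hA, hB⟩ := hcon
        rcases eq_or_lt_of_le hlam0 with heq | hlt
        · have he : lam * fA + (1 - lam) * fB = fB := by rw [← heq]; ring
          linarith
        · have t1 : 0 < lam * (fA - 1) := mul_pos hlt (by linarith)
          have t2 : 0 ≤ (1 - lam) * (fB - 1) := mul_nonneg (by linarith) (by linarith)
          nlinarith
      rcases hAB with hA | hB
      · have hmem : (ℓ + 1, 1) ∈ {c : ℕ × ℕ | 1 ≤ c.1 ∧ 1 ≤ c.2 ∧ (c.1 : ℝ) / r + (c.2 : ℝ) / s ≤ 1} := by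
          refine ⟨by omega, le_refl 1, ?_⟩
          push_cast
          rw [hfA] at hA
          linarith
        have := (Hb (ℓ + 1, 1) hmem).1
        omega
      · have hmem : (1, h + 1) ∈ {c : ℕ × ℕ | 1 ≤ c.1 ∧ 1 ≤ c.2 ∧ (c.1 : ℝ) / r + (c.2 : ℝ) / s ≤ 1} := by
          refine ⟨le_refl 1, by omega, ?_⟩
          push_cast
          rw [hfB] at hB
          linarith
        have := (Hb (1, h + 1) hmem).2
        omega
    · intro hsub c hc
      obtain ⟨x, y⟩ := c
      obtain ⟨h1x, h1y, hyh, hfl⟩ := hsub hc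
      have hre : (h:ℝ)*x + ℓ*y ≤ (h:ℝ)*ℓ + h + ℓ - 1 := (key_lem h ℓ x y hh).1 hfl
      have hy1 : (1:ℝ) ≤ y := by exact_mod_cast h1y
      have hxR : (x:ℝ) < ℓ + 1 := by
        have h2 : (h:ℝ)*x < h*(ℓ+1) := by nlinarith
        exact lt_of_mul_lt_mul_left h2 hpos.le
      have : x < ℓ + 1 := by exact_mod_cast hxR
      exact ⟨by omega, hyh⟩
end

section
/- For integers ℓ, d, e with 1 ≤ d < e ≤ ℓ, the number of lattice points (x,y) ∈ ℕ² with x ≥ d+1, y ≥ 1, ex + dy ≤ e + d(ℓ+1), plus the number of lattice points (x,y) ∈ ℕ² with x ≥ e+1, y ≥ 1, (e−d)x + ey < (e−d)(ℓ+1) + e, equals C(ℓ − e + 2, 2). -/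
lemma key_div (d e k : ℕ) (hd : 0 < d) (hde : d < e) :
    ((e - d) * k + e - 1) / e + d * k / e = k := by
  have he0 : 0 < e := hd.trans hde
  obtain ⟨q, r, hr, heq⟩ : ∃ q r, r < e ∧ d * k = e * q + r :=
    ⟨d * k / e, d * k % e, Nat.mod_lt _ he0, (Nat.div_add_mod _ _).symm⟩
  have hq : q ≤ k := by
    have h1 : e * q ≤ e * k := by
      calc e * q ≤ d * k := by omega
        _ ≤ e * k := Nat.mul_le_mul_right _ hde.le
    exact Nat.le_of_mul_le_mul_left h1 he0
  have h3 : e * (k - q) + e * q = e * k := by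
    rw [← Nat.mul_add, Nat.sub_add_cancel hq]
  have h4 : (e - d) * k + d * k = e * k := by
    rw [← Nat.add_mul, Nat.sub_add_cancel hde.le]
  have h2 : (e - d) * k + e - 1 = e * (k - q) + (e - 1 - r) := by omega
  have h5 : d * k / e = q := by
    rw [heq, Nat.mul_add_div he0]
    simp [Nat.div_eq_of_lt hr]
  rw [h2, h5, Nat.mul_add_div he0, Nat.div_eq_of_lt (by omega : e - 1 - r < e)]
  omega

lemma sum_id (d e m : ℕ) (hd : 0 < d) (hde : d < e) :
    ∑ k ∈ Finset.range (m + 1), (d * k / e + 1)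
      + ∑ k ∈ Finset.Icc 1 m, ((e - d) * k + e - 1) / e = (m + 2).choose 2 := by
  induction m with
  | zero => simp
  | succ n ih =>
    rw [Finset.sum_range_succ, Finset.sum_Icc_succ_top (by omega)]
    have hkey := key_div d e (n + 1) hd hde
    have hch : (n + 1 + 2).choose 2 = (n + 2 + 1).choose 2 ∧ (n + 2 + 1).choose 2 = (n + 2).choose 2 + (n + 2) := by
      have := Nat.choose_succ_succ (n + 2) 1
      exact ⟨rfl, by simp [Nat.choose_one_right] at this; omega⟩
    omega

/-- for 1 ≤ d < e ≤ ℓ, the number of lattice points in the triangle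
T^<_{d,e,ℓ} plus the number of lattice points in T^≥_{e,e−d,ℓ} equals
C(ℓ − e + 2, 2). -/
theorem stmt19 (ℓ d e : ℕ) (hd : 1 ≤ d) (hde : d < e) (he : e ≤ ℓ) :
    {p : ℕ × ℕ | d + 1 ≤ p.1 ∧ 1 ≤ p.2 ∧
        e * p.1 + d * p.2 ≤ e + d * (ℓ + 1)}.ncard +
      {p : ℕ × ℕ | e + 1 ≤ p.1 ∧ 1 ≤ p.2 ∧
        (e - d) * p.1 + e * p.2 < (e - d) * (ℓ + 1) + e}.ncard =
      Nat.choose (ℓ - e + 2) 2 := by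
  have hd0 : 0 < d := hd
  have he0 : 0 < e := hd0.trans hde
  -- Step 1: sets as finsets
  have hA : {p : ℕ × ℕ | d + 1 ≤ p.1 ∧ 1 ≤ p.2 ∧
        e * p.1 + d * p.2 ≤ e + d * (ℓ + 1)}
      = ↑((Finset.Icc (d+1) (ℓ+1) ×ˢ Finset.Icc 1 (ℓ+1)).filter
          (fun p => e * p.1 + d * p.2 ≤ e + d * (ℓ + 1))) := by
    ext ⟨x, y⟩
    simp only [Set.mem_setOf_eq, Finset.mem_coe, Finset.mem_filter,
      Finset.mem_product, Finset.mem_Icc]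
    constructor
    · rintro ⟨hx, hy, h⟩
      have h1 : d ≤ d * y := Nat.le_mul_of_pos_right d hy
      have h2 : e ≤ e * x := Nat.le_mul_of_pos_right e (by omega)
      have h3 : d * ℓ ≤ e * ℓ := Nat.mul_le_mul_right ℓ hde.le
      have h4 : d * (ℓ + 1) = d * ℓ + d := by ring
      have h5 : e * (ℓ + 1) = e * ℓ + e := by ring
      have hx2 : x ≤ ℓ + 1 :=
        Nat.le_of_mul_le_mul_left (by omega : e * x ≤ e * (ℓ+1)) he0
      have hy2 : y ≤ ℓ + 1 :=
        Nat.le_of_mul_le_mul_left (by omega : d * y ≤ d * (ℓ+1)) hd0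
      exact ⟨⟨⟨hx, hx2⟩, hy, hy2⟩, h⟩
    · rintro ⟨⟨⟨hx, _⟩, hy, _⟩, h⟩; exact ⟨hx, hy, h⟩
  have hB : {p : ℕ × ℕ | e + 1 ≤ p.1 ∧ 1 ≤ p.2 ∧
        (e - d) * p.1 + e * p.2 < (e - d) * (ℓ + 1) + e}
      = ↑((Finset.Icc (e+1) ℓ ×ˢ Finset.Icc 1 (ℓ+1)).filter
          (fun p => (e - d) * p.1 + e * p.2 < (e - d) * (ℓ + 1) + e)) := by
    ext ⟨x, y⟩
    simp only [Set.mem_setOf_eq, Finset.mem_coe, Finset.mem_filter,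
      Finset.mem_product, Finset.mem_Icc]
    constructor
    · rintro ⟨hx, hy, h⟩
      have h1 : e ≤ e * y := Nat.le_mul_of_pos_right e hy
      have h2 : (e - d) * (ℓ + 1) ≤ e * (ℓ + 1) :=
        Nat.mul_le_mul_right _ (by omega)
      have h5 : e * (ℓ + 2) = e * (ℓ + 1) + e := by ring
      have hx2 : x ≤ ℓ := by
        have hlt : (e - d) * x < (e - d) * (ℓ + 1) := by omega
        have := Nat.lt_of_mul_lt_mul_left hlt
        omega
      have hy2 : y ≤ ℓ + 1 := by
        have hlt : e * y < e * (ℓ + 2) := by omega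
        have := Nat.lt_of_mul_lt_mul_left hlt
        omega
      exact ⟨⟨⟨hx, hx2⟩, hy, hy2⟩, h⟩
    · rintro ⟨⟨⟨hx, _⟩, hy, _⟩, h⟩; exact ⟨hx, hy, h⟩
  rw [hA, hB, Set.ncard_coe_finset, Set.ncard_coe_finset]
  -- Step 2: card of A as a sum over y
  have hcardA : ((Finset.Icc (d+1) (ℓ+1) ×ˢ Finset.Icc 1 (ℓ+1)).filter
          (fun p => e * p.1 + d * p.2 ≤ e + d * (ℓ + 1))).card
      = ∑ y ∈ Finset.Icc 1 (ℓ+1), ((e + d * (ℓ + 1) - d * y) / e + 1 - (d + 1)) := by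
    rw [Finset.card_filter, Finset.sum_product_right]
    refine Finset.sum_congr rfl fun y hy => ?_
    rw [Finset.mem_Icc] at hy
    have hfil : (Finset.Icc (d+1) (ℓ+1)).filter
          (fun x => e * x + d * y ≤ e + d * (ℓ + 1))
        = Finset.Icc (d+1) ((e + d * (ℓ + 1) - d * y) / e) := by
      ext x
      simp only [Finset.mem_filter, Finset.mem_Icc]
      have hdy : d * y ≤ d * (ℓ + 1) := Nat.mul_le_mul_left d hy.2
      have hcm : x * e = e * x := Nat.mul_comm x e
      constructor
      · rintro ⟨⟨hx1, hx2⟩, h⟩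
        refine ⟨hx1, ?_⟩
        rw [Nat.le_div_iff_mul_le he0]
        omega
      · rintro ⟨hx1, hx2⟩
        rw [Nat.le_div_iff_mul_le he0] at hx2
        have h1 : d ≤ d * y := Nat.le_mul_of_pos_right d hy.1
        have h3 : d * ℓ ≤ e * ℓ := Nat.mul_le_mul_right ℓ hde.le
        have h4 : d * (ℓ + 1) = d * ℓ + d := by ring
        have h5 : e * (ℓ + 1) = e * ℓ + e := by ring
        have hxle : x ≤ ℓ + 1 :=
          Nat.le_of_mul_le_mul_left (by omega : e * x ≤ e * (ℓ+1)) he0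
        exact ⟨⟨hx1, hxle⟩, by omega⟩
    calc (∑ x ∈ Finset.Icc (d+1) (ℓ+1),
            if e * (x, y).1 + d * (x, y).2 ≤ e + d * (ℓ + 1) then 1 else 0)
        = ((Finset.Icc (d+1) (ℓ+1)).filter
            (fun x => e * x + d * y ≤ e + d * (ℓ + 1))).card :=
          (Finset.card_filter _ _).symm
      _ = (e + d * (ℓ + 1) - d * y) / e + 1 - (d + 1) := by
          rw [hfil, Nat.card_Icc]
  -- Step 3: card of B as a sum over x
  have hcardB : ((Finset.Icc (e+1) ℓ ×ˢ Finset.Icc 1 (ℓ+1)).filter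
          (fun p => (e - d) * p.1 + e * p.2 < (e - d) * (ℓ + 1) + e)).card
      = ∑ x ∈ Finset.Icc (e+1) ℓ, ((e - d) * (ℓ + 1) + e - (e - d) * x - 1) / e := by
    rw [Finset.card_filter, Finset.sum_product]
    refine Finset.sum_congr rfl fun x hx => ?_
    rw [Finset.mem_Icc] at hx
    have hux : (e - d) * x ≤ (e - d) * ℓ := Nat.mul_le_mul_left _ hx.2
    have hD : (e - d) * (ℓ + 1) = (e - d) * ℓ + (e - d) := by ring
    have hfil : (Finset.Icc 1 (ℓ+1)).filter
          (fun y => (e - d) * x + e * y < (e - d) * (ℓ + 1) + e)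
        = Finset.Icc 1 (((e - d) * (ℓ + 1) + e - (e - d) * x - 1) / e) := by
      ext y
      simp only [Finset.mem_filter, Finset.mem_Icc]
      have hcm : y * e = e * y := Nat.mul_comm y e
      constructor
      · rintro ⟨⟨hy1, hy2⟩, h⟩
        have h1 : e ≤ e * y := Nat.le_mul_of_pos_right e hy1
        refine ⟨hy1, ?_⟩
        rw [Nat.le_div_iff_mul_le he0]
        omega
      · rintro ⟨hy1, hy2⟩
        rw [Nat.le_div_iff_mul_le he0] at hy2
        have h3 : (e - d) * ℓ ≤ e * ℓ := Nat.mul_le_mul_right ℓ (by omega)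
        have h5 : e * (ℓ + 2) = e * ℓ + e + e := by ring
        have hyle : y ≤ ℓ + 1 := by
          have hlt : e * y < e * (ℓ + 2) := by omega
          have := Nat.lt_of_mul_lt_mul_left hlt
          omega
        exact ⟨⟨hy1, hyle⟩, by omega⟩
    calc (∑ y ∈ Finset.Icc 1 (ℓ+1),
            if (e - d) * (x, y).1 + e * (x, y).2 < (e - d) * (ℓ + 1) + e then 1 else 0)
        = ((Finset.Icc 1 (ℓ+1)).filter
            (fun y => (e - d) * x + e * y < (e - d) * (ℓ + 1) + e)).card :=
          (Finset.card_filter _ _).symm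
      _ = ((e - d) * (ℓ + 1) + e - (e - d) * x - 1) / e := by
          rw [hfil, Nat.card_Icc]
          generalize ((e - d) * (ℓ + 1) + e - (e - d) * x - 1) / e = t
          omega
  rw [hcardA, hcardB]
  -- Step 4: reindex the A-sum
  have hreA : ∑ y ∈ Finset.Icc 1 (ℓ+1), ((e + d * (ℓ + 1) - d * y) / e + 1 - (d + 1))
      = ∑ j ∈ Finset.range (ℓ+1), ((e + d * j) / e + 1 - (d + 1)) := by
    refine Finset.sum_nbij' (fun y => ℓ + 1 - y) (fun j => ℓ + 1 - j) ?_ ?_ ?_ ?_ ?_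
    · intro a ha; rw [Finset.mem_Icc] at ha; rw [Finset.mem_range]; omega
    · intro a ha; rw [Finset.mem_range] at ha; rw [Finset.mem_Icc]; omega
    · intro a ha; rw [Finset.mem_Icc] at ha; omega
    · intro a ha; rw [Finset.mem_range] at ha; omega
    · intro y hy
      rw [Finset.mem_Icc] at hy
      have hsplit : d * (ℓ + 1) = d * (ℓ + 1 - y) + d * y := by
        rw [← Nat.mul_add, Nat.sub_add_cancel hy.2]
      have : e + d * (ℓ + 1) - d * y = e + d * (ℓ + 1 - y) := by omega
      rw [this]
  -- Step 5: evaluate the A-sum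
  have hvalA : ∑ j ∈ Finset.range (ℓ+1), ((e + d * j) / e + 1 - (d + 1))
      = ∑ k ∈ Finset.range (ℓ - e + 1), (d * k / e + 1) := by
    rw [Finset.range_eq_Ico, ← Finset.sum_Ico_consecutive _ (Nat.zero_le e) (by omega : e ≤ ℓ + 1)]
    have hz : ∑ j ∈ Finset.Ico 0 e, ((e + d * j) / e + 1 - (d + 1)) = 0 := by
      refine Finset.sum_eq_zero fun j hj => ?_
      rw [Finset.mem_Ico] at hj
      have h1 : d * j ≤ d * (e - 1) := Nat.mul_le_mul_left d (by omega)
      have h2 : d * e = d * (e - 1) + d := by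
        rw [← Nat.mul_succ]; congr 1; omega
      have h3 : d * j / e < d := by
        rw [Nat.div_lt_iff_lt_mul he0]
        omega
      have h4 : (e + d * j) / e = 1 + d * j / e := by
        rw [show e + d * j = e * 1 + d * j by ring, Nat.mul_add_div he0]
      omega
    rw [hz, Finset.sum_Ico_eq_sum_range,
      show ℓ + 1 - e = ℓ - e + 1 by omega, Nat.zero_add]
    refine Finset.sum_congr rfl fun k _ => ?_
    have h1 : e + d * (e + k) = e * (1 + d) + d * k := by ring
    rw [h1, Nat.mul_add_div he0]
    generalize d * k / e = t
    omega
  -- Step 6: reindex the B-sum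
  have hreB : ∑ x ∈ Finset.Icc (e+1) ℓ, ((e - d) * (ℓ + 1) + e - (e - d) * x - 1) / e
      = ∑ k ∈ Finset.Icc 1 (ℓ - e), ((e - d) * k + e - 1) / e := by
    refine Finset.sum_nbij' (fun x => ℓ + 1 - x) (fun k => ℓ + 1 - k) ?_ ?_ ?_ ?_ ?_
    · intro a ha; rw [Finset.mem_Icc] at ha ⊢; omega
    · intro a ha; rw [Finset.mem_Icc] at ha ⊢; omega
    · intro a ha; rw [Finset.mem_Icc] at ha; omega
    · intro a ha; rw [Finset.mem_Icc] at ha; omega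
    · intro x hx
      rw [Finset.mem_Icc] at hx
      have hsplit : (e - d) * (ℓ + 1) = (e - d) * (ℓ + 1 - x) + (e - d) * x := by
        rw [← Nat.mul_add, Nat.sub_add_cancel (by omega : x ≤ ℓ + 1)]
      have : (e - d) * (ℓ + 1) + e - (e - d) * x - 1 = (e - d) * (ℓ + 1 - x) + e - 1 := by
        omega
      rw [this]
  rw [hreA, hvalA, hreB]
  exact sum_id d e (ℓ - e) hd0 hde
end
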